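/- For every real x, φ(x)² ≤ (2/π) · Φ(x) · (1 − Φ(x)), with equality if and only if x = 0; i.e., the probit weight function φ(x)²/(Φ(x)(1 − Φ(x))) attains its maximal value 2/π exactly at x = 0. -/

import Mathlib

open Real MeasureTheory

/-- The standard normal density `φ`. -/
noncomputable def stdNormalPDF (x : ℝ) : ℝ :=
  (Real.sqrt (2 * Real.pi))⁻¹ * Real.exp (-(x ^ 2) / 2)

/-- The standard normal cumulative distribution function `Φ`. -/
noncomputable def stdNormalCDF (x : ℝ) : ℝ :=
  ∫ u in Set.Iic x, stdNormalPDF u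

section Aux

open Set

lemma pdf_eq (x : ℝ) : stdNormalPDF x = (Real.sqrt (2 * Real.pi))⁻¹ * Real.exp (-(2⁻¹ : ℝ) * x ^ 2) := by
  rw [stdNormalPDF]; ring_nf

lemma pdf_pos (x : ℝ) : 0 < stdNormalPDF x := by
  have : 0 < Real.sqrt (2 * Real.pi) := Real.sqrt_pos.2 (by positivity)
  exact mul_pos (inv_pos.2 this) (Real.exp_pos _)

lemma pdf_even (x : ℝ) : stdNormalPDF (-x) = stdNormalPDF x := by
  simp [stdNormalPDF]

lemma continuous_pdf : Continuous stdNormalPDF := by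
  unfold stdNormalPDF; fun_prop

lemma integrable_pdf : Integrable stdNormalPDF := by
  have : Integrable (fun x : ℝ => (Real.sqrt (2 * Real.pi))⁻¹ * Real.exp (-(2⁻¹:ℝ) * x ^ 2)) :=
    (integrable_exp_neg_mul_sq (by norm_num : (0:ℝ) < 2⁻¹)).const_mul _
  exact this.congr (Filter.Eventually.of_forall fun x => (pdf_eq x).symm)

lemma integral_pdf : ∫ x, stdNormalPDF x = 1 := by
  have h : ∫ x, stdNormalPDF x = (Real.sqrt (2 * Real.pi))⁻¹ * ∫ x : ℝ, Real.exp (-(2⁻¹:ℝ) * x ^ 2) := by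
    rw [← integral_const_mul]
    exact integral_congr_ae (Filter.Eventually.of_forall fun x => pdf_eq x)
  rw [h, integral_gaussian]
  have h2 : (π / 2⁻¹ : ℝ) = 2 * π := by ring
  rw [h2, inv_mul_cancel₀]
  positivity

lemma cdf_sub (a b : ℝ) : stdNormalCDF b - stdNormalCDF a = ∫ u in a..b, stdNormalPDF u :=
  intervalIntegral.integral_Iic_sub_Iic integrable_pdf.integrableOn integrable_pdf.integrableOn

lemma hasDerivAt_cdf (x : ℝ) : HasDerivAt stdNormalCDF (stdNormalPDF x) x := by
  have h : HasDerivAt (fun u => ∫ t in (0:ℝ)..u, stdNormalPDF t) (stdNormalPDF x) x :=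
    intervalIntegral.integral_hasDerivAt_right integrable_pdf.intervalIntegrable
      (continuous_pdf.stronglyMeasurableAtFilter _ _) continuous_pdf.continuousAt
  have he : stdNormalCDF = fun u => stdNormalCDF 0 + ∫ t in (0:ℝ)..u, stdNormalPDF t := by
    funext u
    rw [← cdf_sub 0 u]; ring
  rw [he]
  simpa using h.const_add (stdNormalCDF 0)

lemma one_sub_cdf (x : ℝ) : 1 - stdNormalCDF x = ∫ u in Ioi x, stdNormalPDF u := by
  have := intervalIntegral.integral_Iic_add_Ioi (b := x) integrable_pdf.integrableOn
    integrable_pdf.integrableOn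
  rw [integral_pdf] at this
  rw [stdNormalCDF]
  linarith

lemma cdf_neg (x : ℝ) : stdNormalCDF (-x) = 1 - stdNormalCDF x := by
  rw [one_sub_cdf, stdNormalCDF]
  have : (∫ u in Iic (-x), stdNormalPDF u) = ∫ u in Iic (-x), stdNormalPDF (-u) := by
    exact integral_congr_ae (Filter.Eventually.of_forall fun u => (pdf_even u).symm)
  rw [this, integral_comp_neg_Iic, neg_neg]

lemma cdf_zero : stdNormalCDF 0 = 1 / 2 := by
  have := cdf_neg 0
  rw [neg_zero] at this
  linarith

lemma cdf_mono : Monotone stdNormalCDF := by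
  intro a b hab
  rw [stdNormalCDF, stdNormalCDF]
  apply setIntegral_mono_set integrable_pdf.integrableOn
    (Filter.Eventually.of_forall fun u => (pdf_pos u).le)
    (HasSubset.Subset.eventuallyLE (Iic_subset_Iic.2 hab))

lemma cdf_le_one (x : ℝ) : stdNormalCDF x ≤ 1 := by
  have h := one_sub_cdf x
  have : 0 ≤ ∫ u in Ioi x, stdNormalPDF u :=
    setIntegral_nonneg measurableSet_Ioi fun u _ => (pdf_pos u).le
  linarith

lemma hasDerivAt_pdf (x : ℝ) : HasDerivAt stdNormalPDF (-x * stdNormalPDF x) x := by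
  have h1 : HasDerivAt (fun u : ℝ => -(u ^ 2) / 2) (-x) x := by
    have := ((hasDerivAt_pow 2 x).neg).div_const 2
    simpa using this.congr_deriv (by ring)
  have h2 := (h1.exp).const_mul (Real.sqrt (2 * Real.pi))⁻¹
  have he : stdNormalPDF = fun u => (Real.sqrt (2 * Real.pi))⁻¹ * Real.exp (-(u ^ 2) / 2) := rfl
  rw [he]
  refine h2.congr_deriv ?_
  beta_reduce
  ring

noncomputable def kfun (x : ℝ) : ℝ :=
  (1 - 2 * stdNormalCDF x) / Real.pi + x * stdNormalPDF x

noncomputable def hfun (x : ℝ) : ℝ :=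
  2 / Real.pi * stdNormalCDF x * (1 - stdNormalCDF x) - stdNormalPDF x ^ 2

lemma hasDerivAt_k (x : ℝ) :
    HasDerivAt kfun (stdNormalPDF x * (1 - 2 / Real.pi - x ^ 2)) x := by
  have h1 := (((hasDerivAt_cdf x).const_mul 2).const_sub 1).div_const Real.pi
  have h2 := (hasDerivAt_id x).mul (hasDerivAt_pdf x)
  have h := h1.add h2
  have he : kfun = fun u => (1 - 2 * stdNormalCDF u) / Real.pi + u * stdNormalPDF u := rfl
  rw [he]
  refine h.congr_deriv ?_
  simp only [id]
  ring

lemma hasDerivAt_h (x : ℝ) :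
    HasDerivAt hfun (2 * stdNormalPDF x * kfun x) x := by
  have hΦ := hasDerivAt_cdf x
  have h1 := ((hΦ.const_mul (2 / Real.pi)).mul (hΦ.const_sub 1)).sub ((hasDerivAt_pdf x).pow 2)
  have he : hfun = fun u =>
      2 / Real.pi * stdNormalCDF u * (1 - stdNormalCDF u) - stdNormalPDF u ^ 2 := rfl
  rw [he]
  refine h1.congr_deriv ?_
  rw [kfun]
  ring

lemma pdf_anti {u v : ℝ} (hu : 0 ≤ u) (huv : u ≤ v) : stdNormalPDF v ≤ stdNormalPDF u := by
  rw [stdNormalPDF, stdNormalPDF]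
  have : 0 < (Real.sqrt (2 * Real.pi))⁻¹ := by
    have : 0 < Real.sqrt (2 * Real.pi) := Real.sqrt_pos.2 (by positivity)
    positivity
  apply mul_le_mul_of_nonneg_left _ this.le
  apply Real.exp_le_exp.2
  nlinarith

lemma tail_lb {t : ℝ} (ht : 0 ≤ t) :
    1 / 3 * stdNormalPDF (t + 1 / 3) ≤ 1 - stdNormalCDF t := by
  rw [one_sub_cdf]
  have h1 : ∫ u in Ioc t (t + 1 / 3), stdNormalPDF u ≤ ∫ u in Ioi t, stdNormalPDF u := by
    apply setIntegral_mono_set integrable_pdf.integrableOn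
      (Filter.Eventually.of_forall fun u => (pdf_pos u).le)
    exact HasSubset.Subset.eventuallyLE Ioc_subset_Ioi_self
  have h2 : ∫ _u in Ioc t (t + 1 / 3), stdNormalPDF (t + 1 / 3)
      ≤ ∫ u in Ioc t (t + 1 / 3), stdNormalPDF u := by
    apply setIntegral_mono_on (integrableOn_const (by simp))
      integrable_pdf.integrableOn measurableSet_Ioc
    intro u hu
    exact pdf_anti (by linarith [hu.1]) hu.2
  have h3 : ∫ _u in Ioc t (t + 1 / 3), stdNormalPDF (t + 1 / 3)
      = 1 / 3 * stdNormalPDF (t + 1 / 3) := by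
    rw [setIntegral_const, Real.volume_real_Ioc, smul_eq_mul]
    norm_num
  linarith

lemma sqrt_two_pi_le_three : Real.sqrt (2 * Real.pi) ≤ 3 := by
  rw [show (3:ℝ) = Real.sqrt 9 by
    rw [show (9:ℝ) = 3 ^ 2 by norm_num, Real.sqrt_sq]; norm_num]
  exact Real.sqrt_le_sqrt (by nlinarith [Real.pi_le_four])

lemma exp_three_gt : (6:ℝ) < Real.exp 3 := by
  have h := Real.add_one_le_exp (1.5 : ℝ)
  have : Real.exp 3 = Real.exp 1.5 * Real.exp 1.5 := by
    rw [← Real.exp_add]; norm_num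
  nlinarith [Real.exp_pos (1.5:ℝ)]

lemma big {t : ℝ} (ht : 3 ≤ t) : 0 < hfun t := by
  have hπ := Real.pi_pos
  have hπ4 := Real.pi_le_four
  have h1 : (1:ℝ)/2 ≤ stdNormalCDF t := by
    have := cdf_mono (show (0:ℝ) ≤ t by linarith)
    rw [cdf_zero] at this; linarith
  have h2 : stdNormalCDF t ≤ 1 := cdf_le_one t
  have h3 := tail_lb (show (0:ℝ) ≤ t by linarith)
  have hs0 : 0 < Real.sqrt (2 * Real.pi) := Real.sqrt_pos.2 (by positivity)
  -- key : 3 * π * pdf t ^ 2 < pdf (t + 1/3)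
  have key : 3 * Real.pi * stdNormalPDF t ^ 2 < stdNormalPDF (t + 1/3) := by
    set s := Real.sqrt (2 * Real.pi) with hs
    have hE : Real.exp (-(t^2)) * Real.exp 3 ≤ Real.exp (-((t + 1/3)^2) / 2) := by
      rw [← Real.exp_add]
      exact Real.exp_le_exp.2 (by nlinarith)
    have hφ2 : stdNormalPDF t ^ 2 * (2 * Real.pi) = Real.exp (-(t^2)) := by
      rw [stdNormalPDF, mul_pow, inv_pow, Real.sq_sqrt (by positivity), pow_two,
        ← Real.exp_add, show -(t^2)/2 + -(t^2)/2 = -(t^2) by ring]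
      field_simp
    have hφP : stdNormalPDF (t + 1/3) * s = Real.exp (-((t + 1/3)^2) / 2) := by
      rw [stdNormalPDF, mul_assoc, mul_comm (Real.exp _) s, ← mul_assoc,
        inv_mul_cancel₀ hs0.ne', one_mul]
    have ha : 0 < stdNormalPDF t ^ 2 := pow_pos (pdf_pos t) 2
    have hstep : 3 * Real.pi * stdNormalPDF t ^ 2 * s < stdNormalPDF (t + 1/3) * s := by
      have hs3 : s ≤ 3 := sqrt_two_pi_le_three
      calc 3 * Real.pi * stdNormalPDF t ^ 2 * s
          ≤ 3 * Real.pi * stdNormalPDF t ^ 2 * 3 :=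
            mul_le_mul_of_nonneg_left hs3 (by positivity)
        _ < Real.exp 3 * (stdNormalPDF t ^ 2 * (2 * Real.pi)) := by
            nlinarith [exp_three_gt, mul_pos hπ ha,
              mul_lt_mul_of_pos_right exp_three_gt (mul_pos hπ ha)]
        _ = Real.exp (-(t^2)) * Real.exp 3 := by rw [hφ2]; ring
        _ ≤ Real.exp (-((t + 1/3)^2) / 2) := hE
        _ = stdNormalPDF (t + 1/3) * s := hφP.symm
    exact lt_of_mul_lt_mul_right hstep hs0.le
  have hkey2 : stdNormalPDF t ^ 2 < 1 / Real.pi * (1/3 * stdNormalPDF (t + 1/3)) := by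
    rw [div_mul_eq_mul_div, one_mul, lt_div_iff₀ hπ]
    nlinarith
  have hP : 0 ≤ 1 - stdNormalCDF t := by linarith
  rw [hfun]
  have c1 : 1 / Real.pi * (1/3 * stdNormalPDF (t + 1/3)) ≤ 1 / Real.pi * (1 - stdNormalCDF t) :=
    mul_le_mul_of_nonneg_left h3 (by positivity)
  have c2 : 1 / Real.pi * (1 - stdNormalCDF t) ≤ 2 / Real.pi * stdNormalCDF t * (1 - stdNormalCDF t) := by
    rw [show 1 / Real.pi * (1 - stdNormalCDF t) = 2 / Real.pi * (1/2) * (1 - stdNormalCDF t) by ring]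
    apply mul_le_mul_of_nonneg_right _ hP
    exact mul_le_mul_of_nonneg_left h1 (by positivity)
  linarith

lemma deriv_k (x : ℝ) : deriv kfun x = stdNormalPDF x * (1 - 2 / Real.pi - x ^ 2) :=
  (hasDerivAt_k x).deriv

lemma deriv_h (x : ℝ) : deriv hfun x = 2 * stdNormalPDF x * kfun x :=
  (hasDerivAt_h x).deriv

lemma cont_k : Continuous kfun :=
  continuous_iff_continuousAt.2 fun x => (hasDerivAt_k x).continuousAt

lemma cont_h : Continuous hfun :=
  continuous_iff_continuousAt.2 fun x => (hasDerivAt_h x).continuousAt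

lemma k_zero : kfun 0 = 0 := by rw [kfun, cdf_zero]; ring

lemma h_zero : hfun 0 = 0 := by
  have h0 : (-((0:ℝ)^2))/2 = 0 := by norm_num
  have hsq : stdNormalPDF 0 ^ 2 = (2 * Real.pi)⁻¹ := by
    rw [stdNormalPDF, h0, Real.exp_zero, mul_one, inv_pow, Real.sq_sqrt (by positivity)]
  rw [hfun, hsq, cdf_zero]
  have hπ := Real.pi_pos
  field_simp
  ring

lemma c_pos : 0 < 1 - 2 / Real.pi := by
  have hπ := Real.pi_gt_three
  rw [sub_pos, div_lt_one (by linarith)]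
  linarith

noncomputable def scn : ℝ := Real.sqrt (1 - 2 / Real.pi)

lemma scn_pos : 0 < scn := Real.sqrt_pos.2 c_pos

lemma scn_sq : scn ^ 2 = 1 - 2 / Real.pi := Real.sq_sqrt c_pos.le

lemma scn_lt_three : scn < 3 := by
  have h1 := scn_sq
  have h2 := scn_pos
  have h3 : 0 ≤ 2 / Real.pi := by positivity
  nlinarith

lemma k_strictMono : StrictMonoOn kfun (Icc 0 scn) := by
  apply strictMonoOn_of_deriv_pos (convex_Icc _ _) cont_k.continuousOn
  intro u hu
  rw [interior_Icc] at hu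
  rw [deriv_k]
  have h1 : u ^ 2 < 1 - 2 / Real.pi := by nlinarith [scn_sq, scn_pos, hu.1, hu.2]
  nlinarith [pdf_pos u]

lemma k_anti : AntitoneOn kfun (Ici scn) := by
  apply antitoneOn_of_deriv_nonpos (convex_Ici _) cont_k.continuousOn
  · intro u _
    exact (hasDerivAt_k u).differentiableAt.differentiableWithinAt
  · intro u hu
    rw [interior_Ici] at hu
    rw [deriv_k]
    have h1 : 1 - 2 / Real.pi ≤ u ^ 2 := by nlinarith [scn_sq, scn_pos, mem_Ioi.1 hu]
    nlinarith [pdf_pos u]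

lemma main {t : ℝ} (ht : 0 < t) : 0 < hfun t := by
  rcases le_or_gt 3 t with h3 | h3
  · exact big h3
  by_cases hk : ∀ u ∈ Icc (0:ℝ) t, 0 ≤ kfun u
  · set m := min scn t with hm
    have hm0 : 0 < m := lt_min scn_pos ht
    have hmsc : m ≤ scn := min_le_left _ _
    have hmt : m ≤ t := min_le_right _ _
    have h1 : StrictMonoOn hfun (Icc 0 m) := by
      apply strictMonoOn_of_deriv_pos (convex_Icc _ _) cont_h.continuousOn
      intro u hu
      rw [interior_Icc] at hu
      rw [deriv_h]
      have hku : 0 < kfun u := by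
        have := k_strictMono (left_mem_Icc.2 (by linarith [scn_pos] : (0:ℝ) ≤ scn))
          ⟨hu.1.le, by linarith [hu.2]⟩ hu.1
        rwa [k_zero] at this
      have := pdf_pos u
      positivity
    have h2 : MonotoneOn hfun (Icc m t) := by
      apply monotoneOn_of_deriv_nonneg (convex_Icc _ _) cont_h.continuousOn
      · intro u _
        exact (hasDerivAt_h u).differentiableAt.differentiableWithinAt
      · intro u hu
        rw [interior_Icc] at hu
        rw [deriv_h]
        have hku : 0 ≤ kfun u := hk u ⟨by linarith [hu.1], hu.2.le⟩
        have := pdf_pos u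
        positivity
    have hA : hfun 0 < hfun m := h1 (left_mem_Icc.2 hm0.le) (right_mem_Icc.2 hm0.le) hm0
    have hB : hfun m ≤ hfun t := h2 (left_mem_Icc.2 hmt) (right_mem_Icc.2 hmt) hmt
    rw [h_zero] at hA
    linarith
  · push_neg at hk
    obtain ⟨s, hs_mem, hs_neg⟩ := hk
    have hssc : scn < s := by
      by_contra hle
      push_neg at hle
      have := (k_strictMono.monotoneOn) (left_mem_Icc.2 scn_pos.le) ⟨hs_mem.1, hle⟩ hs_mem.1
      rw [k_zero] at this
      linarith
    have h2 : AntitoneOn hfun (Icc s 3) := by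
      apply antitoneOn_of_deriv_nonpos (convex_Icc _ _) cont_h.continuousOn
      · intro u _
        exact (hasDerivAt_h u).differentiableAt.differentiableWithinAt
      · intro u hu
        rw [interior_Icc] at hu
        rw [deriv_h]
        have hku : kfun u ≤ 0 := by
          have := k_anti (mem_Ici.2 hssc.le) (mem_Ici.2 (by linarith [hu.1] : scn ≤ u)) hu.1.le
          linarith
        nlinarith [pdf_pos u]
    have hst : s ≤ t := hs_mem.2
    have hC : hfun 3 ≤ hfun t := h2 ⟨hst, h3.le⟩ (right_mem_Icc.2 (by linarith)) h3.le
    exact lt_of_lt_of_le (big le_rfl) hC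

lemma h_even (x : ℝ) : hfun (-x) = hfun x := by
  rw [hfun, hfun, cdf_neg, pdf_even]; ring

end Aux

/-- For every real `x`, `φ(x)² ≤ (2/π) Φ(x) (1 − Φ(x))`, with equality iff `x = 0`:
the probit weight function attains its maximal value `2/π` exactly at `x = 0`. -/
theorem probit_weight_bound (x : ℝ) :
    stdNormalPDF x ^ 2 ≤ (2 / Real.pi) * stdNormalCDF x * (1 - stdNormalCDF x) ∧
      (stdNormalPDF x ^ 2 = (2 / Real.pi) * stdNormalCDF x * (1 - stdNormalCDF x) ↔ x = 0) := by
  have key : ∀ y : ℝ, y ≠ 0 → 0 < hfun y := by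
    intro y hy
    rcases hy.lt_or_gt with h | h
    · have := main (show 0 < -y by linarith)
      rwa [h_even] at this
    · exact main h
  have h0 := h_zero
  rw [hfun] at h0
  constructor
  · rcases eq_or_ne x 0 with rfl | hx
    · linarith
    · have := key x hx
      rw [hfun] at this
      linarith
  · constructor
    · intro heq
      by_contra hx
      have := key x hx
      rw [hfun] at this
      linarith
    · rintro rfl
      linarith
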